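/- Let ν be a symmetric measure on (0,1) (invariant under x ↦ 1-x) with ∫ x(1-x) ν(dx) < ∞, and suppose its mixed moments factorize: ∫ x^i (1-x)^j ν(dx) = w(i)w(j) for all integers i,j ≥ 1 and some sequence w(i) ≥ 0. Then ν is a constant multiple of the measure x^β(1-x)^β dx for some β > -2, or a multiple of the Dirac mass at 1/2. -/

import Mathlib

open MeasureTheory
open scoped ENNReal

/-- Corollary 3: a symmetric measure on `(0,1)` with
`∫ x(1-x) ν(dx) < ∞` whose mixed moments factorize is a multiple of a
beta-splitting measure `x^β (1-x)^β dx`, `β > -2`, or of the Dirac mass at `1/2`. -/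
theorem moment_factorization_characterizes_beta
    (ν : Measure ℝ)
    (hsupp : ν (Set.Ioo (0 : ℝ) 1)ᶜ = 0)
    (hsym : Measure.map (fun x => 1 - x) ν = ν)
    (hint : ∫⁻ x in Set.Ioo (0 : ℝ) 1, ENNReal.ofReal (x * (1 - x)) ∂ν < ⊤)
    (w : ℕ → ℝ) (hw : ∀ i : ℕ, 1 ≤ i → 0 ≤ w i)
    (hmom : ∀ i j : ℕ, 1 ≤ i → 1 ≤ j →
      ∫ x in Set.Ioo (0 : ℝ) 1, x ^ i * (1 - x) ^ j ∂ν = w i * w j) :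
    ∃ c : ℝ≥0∞,
      (∃ β : ℝ, β > -2 ∧
        ν = c • ((volume.restrict (Set.Ioo (0 : ℝ) 1)).withDensity
          fun x => ENNReal.ofReal (x ^ β * (1 - x) ^ β))) ∨
      ν = c • Measure.dirac (1 / 2 : ℝ) := by
  -- integrability of all monomials x^i (1-x)^j, i,j ≥ 1
  have hbound : ∀ i j : ℕ, 1 ≤ i → 1 ≤ j → ∀ x ∈ Set.Ioo (0:ℝ) 1,
      0 ≤ x ^ i * (1 - x) ^ j ∧ x ^ i * (1 - x) ^ j ≤ x * (1 - x) := by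
    intro i j hi hj x hx
    obtain ⟨hx0, hx1⟩ := hx
    have h1x : (0:ℝ) ≤ 1 - x := by linarith
    constructor
    · positivity
    · have hxi : x ^ i ≤ x := pow_le_of_le_one hx0.le hx1.le (by omega)
      have hxj : (1 - x) ^ j ≤ 1 - x := pow_le_of_le_one h1x (by linarith) (by omega)
      exact mul_le_mul hxi hxj (by positivity) hx0.le
  have hInt : ∀ i j : ℕ, 1 ≤ i → 1 ≤ j →
      Integrable (fun x => x ^ i * (1 - x) ^ j) (ν.restrict (Set.Ioo (0:ℝ) 1)) := by
    intro i j hi hj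
    refine ⟨(by fun_prop : Continuous fun x : ℝ => x ^ i * (1 - x) ^ j).aestronglyMeasurable, ?_⟩
    rw [hasFiniteIntegral_iff_norm]
    calc ∫⁻ x, ENNReal.ofReal ‖x ^ i * (1 - x) ^ j‖ ∂(ν.restrict (Set.Ioo (0:ℝ) 1))
        ≤ ∫⁻ x, ENNReal.ofReal (x * (1 - x)) ∂(ν.restrict (Set.Ioo (0:ℝ) 1)) := by
          apply lintegral_mono_ae
          filter_upwards [ae_restrict_mem measurableSet_Ioo] with x hx
          obtain ⟨h0, hle⟩ := hbound i j hi hj x hx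
          rw [Real.norm_eq_abs, abs_of_nonneg h0]
          exact ENNReal.ofReal_le_ofReal hle
      _ < ⊤ := hint
  have i31 := hInt 3 1 (by norm_num) le_rfl
  have i21 := hInt 2 1 one_le_two le_rfl
  have i12 := hInt 1 2 le_rfl one_le_two
  have i22 := hInt 2 2 one_le_two one_le_two
  have i13 := hInt 1 3 le_rfl (by norm_num)
  have i11 := hInt 1 1 le_rfl le_rfl
  have hm11 := hmom 1 1 le_rfl le_rfl
  have hm21 := hmom 2 1 one_le_two le_rfl
  have hm12 := hmom 1 2 le_rfl one_le_two
  have hm31 := hmom 3 1 (by norm_num) le_rfl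
  have hm22 := hmom 2 2 one_le_two one_le_two
  have hm13 := hmom 1 3 le_rfl (by norm_num)
  -- first linear identity
  have eq1 : w 2 * w 1 + w 1 * w 2 = w 1 * w 1 := by
    have s1 : ∫ x in Set.Ioo (0:ℝ) 1, (x ^ 2 * (1 - x) ^ 1 + x ^ 1 * (1 - x) ^ 2) ∂ν
        = (∫ x in Set.Ioo (0:ℝ) 1, x ^ 2 * (1 - x) ^ 1 ∂ν)
          + ∫ x in Set.Ioo (0:ℝ) 1, x ^ 1 * (1 - x) ^ 2 ∂ν := integral_add i21 i12
    have h : ∫ x in Set.Ioo (0:ℝ) 1, (x ^ 2 * (1 - x) ^ 1 + x ^ 1 * (1 - x) ^ 2) ∂ν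
        = ∫ x in Set.Ioo (0:ℝ) 1, x ^ 1 * (1 - x) ^ 1 ∂ν := by
      apply integral_congr_ae
      filter_upwards with x
      ring
    rw [s1, hm21, hm12, hm11] at h
    exact h
  -- second linear identity
  have eq2 : w 3 * w 1 + (2 * (w 2 * w 2) + w 1 * w 3) = w 1 * w 1 := by
    have i22' : Integrable (fun x => 2 * (x ^ 2 * (1 - x) ^ 2))
        (ν.restrict (Set.Ioo (0:ℝ) 1)) := i22.const_mul 2
    have s1 : ∫ x in Set.Ioo (0:ℝ) 1, (2 * (x ^ 2 * (1 - x) ^ 2) + x ^ 1 * (1 - x) ^ 3) ∂ν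
        = (∫ x in Set.Ioo (0:ℝ) 1, 2 * (x ^ 2 * (1 - x) ^ 2) ∂ν)
          + ∫ x in Set.Ioo (0:ℝ) 1, x ^ 1 * (1 - x) ^ 3 ∂ν := integral_add i22' i13
    have s2 : ∫ x in Set.Ioo (0:ℝ) 1,
          (x ^ 3 * (1 - x) ^ 1 + (2 * (x ^ 2 * (1 - x) ^ 2) + x ^ 1 * (1 - x) ^ 3)) ∂ν
        = (∫ x in Set.Ioo (0:ℝ) 1, x ^ 3 * (1 - x) ^ 1 ∂ν)
          + ∫ x in Set.Ioo (0:ℝ) 1, (2 * (x ^ 2 * (1 - x) ^ 2) + x ^ 1 * (1 - x) ^ 3) ∂ν :=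
      integral_add i31 (i22'.add i13)
    have s3 : ∫ x in Set.Ioo (0:ℝ) 1, 2 * (x ^ 2 * (1 - x) ^ 2) ∂ν
        = 2 * ∫ x in Set.Ioo (0:ℝ) 1, x ^ 2 * (1 - x) ^ 2 ∂ν := integral_const_mul _ _
    have h : ∫ x in Set.Ioo (0:ℝ) 1,
          (x ^ 3 * (1 - x) ^ 1 + (2 * (x ^ 2 * (1 - x) ^ 2) + x ^ 1 * (1 - x) ^ 3)) ∂ν
        = ∫ x in Set.Ioo (0:ℝ) 1, x ^ 1 * (1 - x) ^ 1 ∂ν := by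
      apply integral_congr_ae
      filter_upwards with x
      ring
    rw [s2, s1, s3, hm31, hm22, hm13, hm11] at h
    exact h
  -- the key integral vanishes
  have hIval : ∫ x in Set.Ioo (0:ℝ) 1, x * (1 - x) * (x - 1/2) ^ 2 ∂ν
      = w 3 * w 1 - w 2 * w 1 + (w 1 * w 1) / 4 := by
    have i14 : Integrable (fun x => (1/4 : ℝ) * (x ^ 1 * (1 - x) ^ 1))
        (ν.restrict (Set.Ioo (0:ℝ) 1)) := i11.const_mul _
    have s0 : ∫ x in Set.Ioo (0:ℝ) 1, x * (1 - x) * (x - 1/2) ^ 2 ∂ν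
        = ∫ x in Set.Ioo (0:ℝ) 1,
            ((x ^ 3 * (1 - x) ^ 1 - x ^ 2 * (1 - x) ^ 1) + (1/4) * (x ^ 1 * (1 - x) ^ 1)) ∂ν := by
      apply integral_congr_ae
      filter_upwards with x
      ring
    have s1 : ∫ x in Set.Ioo (0:ℝ) 1,
          ((x ^ 3 * (1 - x) ^ 1 - x ^ 2 * (1 - x) ^ 1) + (1/4) * (x ^ 1 * (1 - x) ^ 1)) ∂ν
        = (∫ x in Set.Ioo (0:ℝ) 1, (x ^ 3 * (1 - x) ^ 1 - x ^ 2 * (1 - x) ^ 1) ∂ν)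
          + ∫ x in Set.Ioo (0:ℝ) 1, (1/4) * (x ^ 1 * (1 - x) ^ 1) ∂ν :=
      integral_add (i31.sub i21) i14
    have s2 : ∫ x in Set.Ioo (0:ℝ) 1, (x ^ 3 * (1 - x) ^ 1 - x ^ 2 * (1 - x) ^ 1) ∂ν
        = (∫ x in Set.Ioo (0:ℝ) 1, x ^ 3 * (1 - x) ^ 1 ∂ν)
          - ∫ x in Set.Ioo (0:ℝ) 1, x ^ 2 * (1 - x) ^ 1 ∂ν := integral_sub i31 i21
    have s3 : ∫ x in Set.Ioo (0:ℝ) 1, (1/4 : ℝ) * (x ^ 1 * (1 - x) ^ 1) ∂ν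
        = (1/4) * ∫ x in Set.Ioo (0:ℝ) 1, x ^ 1 * (1 - x) ^ 1 ∂ν := integral_const_mul _ _
    rw [s0, s1, s2, s3, hm31, hm21, hm11]
    ring
  have hI0 : ∫ x in Set.Ioo (0:ℝ) 1, x * (1 - x) * (x - 1/2) ^ 2 ∂ν = 0 := by
    rw [hIval]
    rcases eq_or_ne (w 1) 0 with h1 | h1
    · rw [h1]; ring
    · have h2 : w 1 * (2 * w 2) = w 1 * w 1 := by linear_combination eq1
      have h2' : 2 * w 2 = w 1 := mul_left_cancel₀ h1 h2
      linear_combination (1/2) * eq2 + (-(w 2)/2 - 3 * (w 1)/4) * h2'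
  -- hence ν-a.e. on (0,1), x = 1/2
  have hIntg : Integrable (fun x => x * (1 - x) * (x - 1/2) ^ 2)
      (ν.restrict (Set.Ioo (0:ℝ) 1)) := by
    refine ((i31.sub i21).add (i11.const_mul (1/4))).congr ?_
    filter_upwards with x
    simp only [Pi.add_apply, Pi.sub_apply]
    ring
  have hnn : 0 ≤ᵐ[ν.restrict (Set.Ioo (0:ℝ) 1)] fun x => x * (1 - x) * (x - 1/2) ^ 2 := by
    filter_upwards [ae_restrict_mem measurableSet_Ioo] with x hx
    obtain ⟨hx0, hx1⟩ := hx
    have h1x : (0:ℝ) ≤ 1 - x := by linarith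
    positivity
  have hae : (fun x => x * (1 - x) * (x - 1/2) ^ 2) =ᵐ[ν.restrict (Set.Ioo (0:ℝ) 1)] 0 :=
    (integral_eq_zero_iff_of_nonneg_ae hnn hIntg).mp hI0
  have haehalf : ∀ᵐ x ∂(ν.restrict (Set.Ioo (0:ℝ) 1)), x = 1/2 := by
    filter_upwards [hae, ae_restrict_mem measurableSet_Ioo] with x hx hmem
    simp only [Pi.zero_apply] at hx
    obtain ⟨hx0, hx1⟩ := hmem
    have hpos : 0 < x * (1 - x) := by nlinarith
    have hsq : (x - 1/2) ^ 2 = 0 := by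
      by_contra hne
      have h2 : 0 < (x - 1/2) ^ 2 := lt_of_le_of_ne (sq_nonneg _) (Ne.symm hne)
      nlinarith
    have := pow_eq_zero_iff (n := 2) (by norm_num) |>.mp hsq
    linarith
  -- ν is concentrated on {1/2}
  have hcomp : ν ({(1/2 : ℝ)}ᶜ) = 0 := by
    have h1 : ν ({x : ℝ | ¬ x = 1/2} ∩ Set.Ioo (0:ℝ) 1) = 0 := by
      have h := haehalf
      rw [ae_iff, Measure.restrict_apply] at h
      · exact h
      · exact (measurableSet_singleton (1/2 : ℝ)).compl
    have h2 : ({(1/2 : ℝ)}ᶜ : Set ℝ) ⊆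
        ({x : ℝ | ¬ x = 1/2} ∩ Set.Ioo (0:ℝ) 1) ∪ (Set.Ioo (0:ℝ) 1)ᶜ := by
      intro x hx
      by_cases hmem : x ∈ Set.Ioo (0:ℝ) 1
      · exact Or.inl ⟨hx, hmem⟩
      · exact Or.inr hmem
    exact le_antisymm (le_trans (measure_mono h2)
      (le_trans (measure_union_le _ _) (by rw [h1, hsupp]; simp))) zero_le
  refine ⟨ν {(1/2 : ℝ)}, Or.inr ?_⟩
  ext s hs
  rw [Measure.smul_apply, smul_eq_mul, Measure.dirac_apply' _ hs]
  have hkey : ν (s ∩ {(1/2:ℝ)}) = ν s := measure_inter_conull hcomp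
  by_cases hmem : (1/2 : ℝ) ∈ s
  · rw [Set.indicator_of_mem hmem, Pi.one_apply, mul_one, ← hkey]
    congr 1
    exact Set.inter_eq_right.mpr (by simpa using hmem)
  · rw [Set.indicator_of_notMem hmem, mul_zero, ← hkey]
    have he : s ∩ {(1/2:ℝ)} = ∅ := by
      ext x
      simp only [Set.mem_inter_iff, Set.mem_singleton_iff, Set.mem_empty_iff_false,
        iff_false, not_and]
      rintro hxs rfl
      exact hmem hxs
    rw [he, measure_empty]
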